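/- arXiv:1708.01753 — 3 statements merged into one kernel-verified Lean document; each statement's English description precedes it below -/
import Mathlib

section
/- For the diagonal torus T of Aut(NF_n) consisting of diagonal maps e_i ↦ α^i e_i (α ≠ 0), the normalizer of T in Aut(NF_n) equals T itself. -/
/-- The bracket of the null-filiform Leibniz algebra `NF_n` on `Fin n → ℂ`
(0-indexed basis: `[e i, e 0] = e (i+1)`, all other basis products zero). -/
def nfBr (n : ℕ) (x y : Fin n → ℂ) : Fin n → ℂ :=
  fun k => if _ : (k : ℕ) = 0 then 0
    else y ⟨0, k.pos⟩ * x ⟨(k : ℕ) - 1, Nat.lt_of_le_of_lt (Nat.sub_le _ _) k.isLt⟩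

/-- Membership in the diagonal torus `T = {diag(α, α², …, αⁿ) : α ≠ 0}`. -/
def nfTorus (n : ℕ) (M : (Fin n → ℂ) ≃ₗ[ℂ] (Fin n → ℂ)) : Prop :=
  ∃ α : ℂ, α ≠ 0 ∧ ∀ v : Fin n → ℂ, ∀ i : Fin n, M v i = α ^ ((i : ℕ) + 1) * v i

/-- The normalizer of the maximal torus in `Aut(NF_n)` is the torus itself. -/
theorem nf_normalizer_torus (n : ℕ) (M : (Fin n → ℂ) ≃ₗ[ℂ] (Fin n → ℂ))
    (hM : ∀ x y, M (nfBr n x y) = nfBr n (M x) (M y))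
    (hnorm : ∀ T : (Fin n → ℂ) ≃ₗ[ℂ] (Fin n → ℂ), nfTorus n T →
      nfTorus n ((M.symm.trans T).trans M)) :
    nfTorus n M := by
  rcases Nat.eq_zero_or_pos n with hn0 | hn
  · exact ⟨1, one_ne_zero, fun v i => absurd i.isLt (by omega)⟩
  set z0 : Fin n := ⟨0, hn⟩ with hz0
  set e : Fin n → (Fin n → ℂ) := fun j => Pi.single j 1 with he
  -- bracket of basis vectors
  have hS : ∀ (k : ℕ) (hk : k + 1 < n),
      nfBr n (e ⟨k, Nat.lt_of_succ_lt hk⟩) (e z0) = e ⟨k + 1, hk⟩ := by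
    intro k hk
    funext j
    simp only [nfBr, he]
    split_ifs with h
    · rw [Pi.single_apply, if_neg, eq_comm]
      intro hj
      rw [hj] at h
      simp at h
    · simp only [Pi.single_apply, Fin.mk.injEq, Fin.ext_iff, if_true, one_mul]
      split_ifs <;> first | rfl | (have : (z0 : ℕ) = 0 := rfl; omega) | simp
  -- bilinearity of the bracket w.r.t. scalars
  have hbil : ∀ (c d : ℂ) (x y : Fin n → ℂ),
      nfBr n (c • x) (d • y) = (c * d) • nfBr n x y := by
    intro c d x y
    funext k
    simp only [nfBr, Pi.smul_apply, smul_eq_mul]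
    split_ifs with h
    · simp
    · ring
  set a : ℂ := M (e z0) z0 with ha
  -- a ≠ 0
  have ha0 : a ≠ 0 := by
    intro h0
    rcases Nat.lt_or_ge n 2 with h2 | h2
    · -- n = 1 : M (e z0) = 0, contradiction with injectivity
      have hMz : M (e z0) = 0 := by
        funext i
        have : i = z0 := by
          apply Fin.ext; omega
        rw [this]
        exact h0
      have := (LinearEquiv.map_eq_zero_iff M).mp hMz
      have := congrFun this z0
      simp [he] at this
    · -- n ≥ 2 : M (e 1) = 0, contradiction
      have h1 : 0 + 1 < n := by omega
      have hbr1 : M (e ⟨1, h1⟩) = 0 := by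
        rw [show (⟨1, h1⟩ : Fin n) = (⟨0+1, h1⟩ : Fin n) from rfl, ← hS 0 h1, hM]
        funext k
        simp only [nfBr]
        split_ifs with h
        · rfl
        · have : (⟨0, Fin.pos k⟩ : Fin n) = z0 := rfl
          rw [this]
          have : (⟨(0:ℕ), hn⟩ : Fin n) = z0 := rfl
          rw [show M (e z0) z0 = a from rfl, h0, zero_mul]
          rfl
      have := (LinearEquiv.map_eq_zero_iff M).mp hbr1
      have := congrFun this ⟨1, h1⟩
      simp [he] at this
  -- the torus element diag(2, 4, …)
  set T : (Fin n → ℂ) ≃ₗ[ℂ] (Fin n → ℂ) :=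
    LinearEquiv.piCongrRight
      (fun i : Fin n => LinearEquiv.smulOfNeZero ℂ ℂ ((2:ℂ) ^ ((i:ℕ)+1))
        (pow_ne_zero _ two_ne_zero)) with hTdef
  have hT : ∀ v (i : Fin n), T v i = 2 ^ ((i:ℕ)+1) * v i := fun v i => rfl
  obtain ⟨γ, hγ, hcomp⟩ := hnorm T ⟨2, two_ne_zero, hT⟩
  have key : ∀ (x : Fin n → ℂ) (i : Fin n), M (T x) i = γ ^ ((i:ℕ)+1) * M x i := by
    intro x i
    have := hcomp (M x) i
    simpa [LinearEquiv.trans_apply] using this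
  -- T (e z0) = 2 • e z0
  have hTe0 : T (e z0) = (2:ℂ) • e z0 := by
    funext i
    rw [hT, Pi.smul_apply, he]
    simp only [Pi.single_apply, smul_eq_mul]
    split_ifs with h
    · rw [h]
      norm_num
    · ring
  have hMe0eq : ∀ i : Fin n, 2 * M (e z0) i = γ ^ ((i:ℕ)+1) * M (e z0) i := by
    intro i
    have := key (e z0) i
    rw [hTe0, map_smul] at this
    simpa using this
  -- γ = 2
  have hγ2 : γ = 2 := by
    have := hMe0eq z0
    have hz : ((z0 : Fin n) : ℕ) = 0 := rfl
    rw [hz, pow_one] at this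
    have : (2 - γ) * a = 0 := by
      rw [show M (e z0) z0 = a from rfl] at this
      linear_combination this
    rcases mul_eq_zero.mp this with h | h
    · linear_combination -h
    · exact absurd h ha0
  -- M (e z0) = a • e z0
  have hMe0 : M (e z0) = a • e z0 := by
    funext i
    rw [Pi.smul_apply, he]
    by_cases h : i = z0
    · rw [h]
      simp [ha]
      rfl
    · have hi : (i : ℕ) ≠ 0 := by
        intro h0
        exact h (Fin.ext h0)
      have heq := hMe0eq i
      rw [hγ2] at heq
      have h2 : ((2:ℂ)^((i:ℕ)+1)) ≠ 2 := by
        intro hc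
        have : (((2:ℕ)^((i:ℕ)+1) : ℕ) : ℂ) = (((2:ℕ)^1 : ℕ) : ℂ) := by push_cast; simpa using hc
        have := Nat.pow_right_injective (le_refl 2) (Nat.cast_injective this)
        omega
      have : (2 - 2^((i:ℕ)+1)) * M (e z0) i = 0 := by linear_combination heq
      rcases mul_eq_zero.mp this with h' | h'
      · exact absurd (by linear_combination -h') h2
      · rw [h']
        simp [Pi.single_apply, h]
  -- induction: M (e k) = a^(k+1) • e k
  have hMe : ∀ (k : ℕ) (h : k < n),
      M (e ⟨k, h⟩) = a ^ (k+1) • e ⟨k, h⟩ := by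
    intro k
    induction k with
    | zero =>
      intro h
      have : (⟨0, h⟩ : Fin n) = z0 := rfl
      rw [this, pow_one]
      exact hMe0
    | succ k ih =>
      intro h
      have hk : k < n := Nat.lt_of_succ_lt h
      rw [← hS k h, hM, ih hk, hMe0, hbil, hS k h, ← pow_succ]
  -- conclude
  refine ⟨a, ha0, fun v i => ?_⟩
  have hv : v = ∑ j : Fin n, v j • e j := by
    rw [he]
    conv_lhs => rw [← Finset.univ_sum_single v]
    refine Finset.sum_congr rfl fun j _ => ?_
    rw [← Pi.single_smul, smul_eq_mul, mul_one]
  conv_lhs => rw [hv]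
  rw [map_sum]
  have hMj : ∀ j : Fin n, M (v j • e j) = (v j * a ^ ((j:ℕ)+1)) • e j := by
    intro j
    rw [map_smul]
    have := hMe (j : ℕ) j.isLt
    rw [Fin.eta] at this
    rw [this, smul_smul]
  rw [Finset.sum_congr rfl fun j _ => hMj j]
  rw [Finset.sum_apply]
  simp only [Pi.smul_apply, he, Pi.single_apply, smul_eq_mul, mul_ite, mul_one, mul_zero]
  rw [Finset.sum_ite_eq Finset.univ i (fun j => v j * a ^ ((j:ℕ)+1))]
  simp [mul_comm]
end

section
/- For any i with 1 < i < n, the decomposition NF_n = ⊕_{k∈ℤ/iℤ} A_k with A_k = span{e_j : j ≡ k mod i, 1 ≤ j ≤ n} is a ℤ/iℤ-grading of NF_n. -/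
/-- Homogeneous components of the `ℤ/iℤ`-grading:
`A k = span{e_j : j ≡ k mod i}` (1-based indices `j`). -/
noncomputable def nfZModComp (n i : ℕ) (k : ZMod i) : Submodule ℂ (Fin n → ℂ) :=
  Submodule.span ℂ
    {v | ∃ j : Fin n, (((j : ℕ) + 1 : ℕ) : ZMod i) = k ∧ v = Pi.single j (1 : ℂ)}

/-- Coordinate-subspace description of the homogeneous component. -/
noncomputable def coordSub (n i : ℕ) (k : ZMod i) : Submodule ℂ (Fin n → ℂ) where
  carrier := {x | ∀ j : Fin n, (((j : ℕ) + 1 : ℕ) : ZMod i) ≠ k → x j = 0}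
  add_mem' := by intro a b ha hb j hj; simp [ha j hj, hb j hj]
  zero_mem' := by intro j hj; rfl
  smul_mem' := by intro c a ha j hj; simp [ha j hj]

lemma mem_coordSub {n i : ℕ} {k : ZMod i} {x : Fin n → ℂ} :
    x ∈ coordSub n i k ↔ ∀ j : Fin n, (((j : ℕ) + 1 : ℕ) : ZMod i) ≠ k → x j = 0 :=
  Iff.rfl

lemma comp_eq (n i : ℕ) (k : ZMod i) : nfZModComp n i k = coordSub n i k := by
  apply le_antisymm
  · rw [nfZModComp, Submodule.span_le]
    rintro v ⟨j, hj, rfl⟩ j' hj'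
    have hne : j' ≠ j := by rintro rfl; exact hj' hj
    simp [Pi.single_apply, hne]
  · intro x hx
    have hxe : x = ∑ j : Fin n, Pi.single j (x j) := (Finset.univ_sum_single x).symm
    rw [hxe]
    apply Submodule.sum_mem
    intro j _
    have hsm : Pi.single j (x j) = x j • (Pi.single j (1 : ℂ) : Fin n → ℂ) := by
      rw [← Pi.single_smul, smul_eq_mul, mul_one]
    rw [hsm]
    by_cases hj : (((j : ℕ) + 1 : ℕ) : ZMod i) = k
    · exact Submodule.smul_mem _ _ (Submodule.subset_span ⟨j, hj, rfl⟩)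
    · rw [hx j hj]; simp

/-- The "complementary" coordinate subspace. -/
noncomputable def coSub (n i : ℕ) (k : ZMod i) : Submodule ℂ (Fin n → ℂ) where
  carrier := {x | ∀ j : Fin n, (((j : ℕ) + 1 : ℕ) : ZMod i) = k → x j = 0}
  add_mem' := by intro a b ha hb j hj; simp [ha j hj, hb j hj]
  zero_mem' := by intro j hj; rfl
  smul_mem' := by intro c a ha j hj; simp [ha j hj]

/-- For `1 < i < n`, the decomposition by residues mod `i` is a `ℤ/iℤ`-grading
of `NF_n`. -/
theorem nf_ZMod_grading (n i : ℕ) (h1 : 1 < i) (h2 : i < n) :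
    DirectSum.IsInternal (nfZModComp n i) ∧
    ∀ g h : ZMod i, ∀ x ∈ nfZModComp n i g, ∀ y ∈ nfZModComp n i h,
      nfBr n x y ∈ nfZModComp n i (g + h) := by
  haveI : NeZero i := ⟨by omega⟩
  constructor
  · rw [DirectSum.isInternal_submodule_iff_iSupIndep_and_iSup_eq_top]
    constructor
    · intro k
      rw [disjoint_iff_inf_le]
      intro x hx
      obtain ⟨hx1, hx2⟩ := hx
      have hx1' : x ∈ coordSub n i k := by rwa [comp_eq] at hx1
      have hx2' : x ∈ coSub n i k := by
        have hle : (⨆ (j) (_ : j ≠ k), nfZModComp n i j) ≤ coSub n i k := by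
          apply iSup_le; intro k'
          apply iSup_le; intro hk'
          rw [comp_eq]
          intro y hy j hj
          exact hy j (fun hc => hk' (hc.symm.trans hj))
        exact hle hx2
      have : x = 0 := by
        funext j
        by_cases hj : (((j : ℕ) + 1 : ℕ) : ZMod i) = k
        · exact hx2' j hj
        · exact hx1' j hj
      simp [this]
    · rw [eq_top_iff]
      intro x _
      have hxe : x = ∑ j : Fin n, Pi.single j (x j) := (Finset.univ_sum_single x).symm
      rw [hxe]
      apply Submodule.sum_mem
      intro j _
      refine Submodule.mem_iSup_of_mem (((j : ℕ) + 1 : ℕ) : ZMod i) ?_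
      have hsm : Pi.single j (x j) = x j • (Pi.single j (1 : ℂ) : Fin n → ℂ) := by
        rw [← Pi.single_smul, smul_eq_mul, mul_one]
      rw [hsm]
      exact Submodule.smul_mem _ _ (Submodule.subset_span ⟨j, rfl, rfl⟩)
  · intro g h x hx y hy
    rw [comp_eq] at hx hy ⊢
    intro k hk
    show (if _ : (k : ℕ) = 0 then 0 else _) = 0
    split
    · rfl
    · rename_i hk0
      by_cases hh : (((0 : ℕ) + 1 : ℕ) : ZMod i) = h
      · have hg : ((((k : ℕ) - 1 : ℕ) + 1 : ℕ) : ZMod i) ≠ g := by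
          intro hgeq
          apply hk
          have hsub : (k : ℕ) - 1 + 1 = (k : ℕ) :=
            Nat.succ_pred_eq_of_pos (Nat.pos_of_ne_zero hk0)
          rw [← hgeq, ← hh, hsub]
          push_cast
          ring
        rw [hx _ hg, mul_zero]
      · rw [hy _ hh, zero_mul]
end

section
/- Let G be an abelian group and NF_n = ⊕_{g∈G} A_g a G-grading with e_1 ∈ A_x, and suppose x has order i > n in G (or infinite order). Then A_{jx} = span{e_j} for 1 ≤ j ≤ n and A_g = 0 for all other g, so the grading is equivalent to the ℤ-grading with e_j in degree j. -/
/-- If `e_1` is homogeneous of degree `x` and the order of `x` exceeds `n`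
(or is infinite), the grading is the `ℤ`-grading: `A_{jx} = ⟨e_j⟩` and all
other components vanish. -/
theorem nf_grading_large_order (n : ℕ) (G : Type*) [AddCommGroup G] [DecidableEq G]
    (A : G → Submodule ℂ (Fin n → ℂ)) (hint : DirectSum.IsInternal A)
    (hgr : ∀ g h : G, ∀ u ∈ A g, ∀ v ∈ A h, nfBr n u v ∈ A (g + h))
    (x : G) (hn : 1 ≤ n) (he1 : (Pi.single (⟨0, by omega⟩ : Fin n) (1 : ℂ)) ∈ A x)
    (hord : ∀ m : ℕ, 0 < m → m ≤ n → m • x ≠ 0) :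
    (∀ j : Fin n, A (((j : ℕ) + 1) • x) =
        Submodule.span ℂ {(Pi.single j (1 : ℂ) : Fin n → ℂ)}) ∧
    (∀ g : G, (∀ j : Fin n, g ≠ ((j : ℕ) + 1) • x) → A g = ⊥) := by
  -- e_j ∈ A ((j+1) • x), by induction
  have hEmem : ∀ m : ℕ, ∀ h : m < n,
      (Pi.single (⟨m, h⟩ : Fin n) (1 : ℂ)) ∈ A ((m + 1) • x) := by
    intro m
    induction m with
    | zero => intro h; simpa using he1
    | succ m ih =>
      intro h
      have hm : m < n := by omega
      have hb := hgr _ _ _ (ih hm) _ he1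
      have heq : nfBr n (Pi.single (⟨m, hm⟩ : Fin n) 1)
          (Pi.single (⟨0, by omega⟩ : Fin n) 1) = Pi.single (⟨m + 1, h⟩ : Fin n) (1 : ℂ) := by
        funext k
        simp only [nfBr]
        by_cases hk : (k : ℕ) = 0
        · rw [dif_pos hk, Pi.single_apply, if_neg]
          intro hke
          rw [Fin.ext_iff] at hke
          simp [hk] at hke
        · rw [dif_neg hk]
          have hkpos : 0 < (k : ℕ) := Nat.pos_of_ne_zero hk
          simp only [Pi.single_apply, Fin.ext_iff]
          split_ifs <;> simp_all <;> omega
      rw [heq] at hb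
      rwa [← succ_nsmul x (m + 1)] at hb
  have hE : ∀ j : Fin n, (Pi.single j (1 : ℂ)) ∈ A (((j : ℕ) + 1) • x) := by
    intro j
    simpa using hEmem j.1 j.isLt
  -- distinctness of degrees
  have hdist : ∀ j k : Fin n, ((j : ℕ) + 1) • x = ((k : ℕ) + 1) • x → j = k := by
    have key : ∀ a b : ℕ, a < b → b < n → (a + 1) • x ≠ (b + 1) • x := by
      intro a b hab hbn hEq
      have h1 : (a + 1) • x + (b - a) • x = (b + 1) • x := by
        rw [← add_nsmul]; congr 1; omega
      rw [← hEq, add_eq_left] at h1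
      exact hord (b - a) (by omega) (by omega) h1
    intro j k hjk
    rcases lt_trichotomy (j : ℕ) (k : ℕ) with h | h | h
    · exact absurd hjk (key _ _ h k.isLt)
    · exact Fin.ext h
    · exact absurd hjk.symm (key _ _ h j.isLt)
  -- decomposition of an arbitrary vector
  have hsum : ∀ u : Fin n → ℂ, u = ∑ k : Fin n, u k • (Pi.single k (1 : ℂ) : Fin n → ℂ) := by
    intro u
    have : ∀ k : Fin n, u k • (Pi.single k (1 : ℂ) : Fin n → ℂ) = Pi.single k (u k) := by
      intro k
      rw [← Pi.single_smul, smul_eq_mul, mul_one]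
    simp_rw [this, Finset.univ_sum_single]
  have hind := hint.submodule_iSupIndep
  constructor
  · intro j
    apply le_antisymm
    · intro u hu
      have hcoef : u - u j • (Pi.single j (1 : ℂ) : Fin n → ℂ) ∈ A (((j : ℕ) + 1) • x) :=
        sub_mem hu (Submodule.smul_mem _ _ (hE j))
      have hrepr : u = u j • (Pi.single j (1 : ℂ) : Fin n → ℂ) +
          ∑ k ∈ Finset.univ.erase j, u k • (Pi.single k (1 : ℂ) : Fin n → ℂ) := by
        conv_lhs => rw [hsum u]
        exact (Finset.add_sum_erase _ _ (Finset.mem_univ j)).symm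
      have hrest : u - u j • (Pi.single j (1 : ℂ) : Fin n → ℂ) ∈
          ⨆ (h : G) (_ : h ≠ ((j : ℕ) + 1) • x), A h := by
        have : u - u j • (Pi.single j (1 : ℂ) : Fin n → ℂ) =
            ∑ k ∈ Finset.univ.erase j, u k • (Pi.single k (1 : ℂ) : Fin n → ℂ) := by
          rw [sub_eq_iff_eq_add']
          exact hrepr
        rw [this]
        refine Submodule.sum_mem _ ?_
        intro k hk
        have hkj : k ≠ j := Finset.ne_of_mem_erase hk
        have hne : (((k : ℕ) + 1) • x) ≠ ((j : ℕ) + 1) • x := fun hc => hkj (hdist _ _ hc)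
        exact Submodule.mem_iSup_of_mem _ (Submodule.mem_iSup_of_mem hne
          (Submodule.smul_mem _ _ (hE k)))
      have hz : u - u j • (Pi.single j (1 : ℂ) : Fin n → ℂ) = 0 :=
        Submodule.disjoint_def.mp (hind (((j : ℕ) + 1) • x)) _ hcoef hrest
      have : u = u j • (Pi.single j (1 : ℂ) : Fin n → ℂ) := by
        rwa [sub_eq_zero] at hz
      rw [this]
      exact Submodule.smul_mem _ _ (Submodule.mem_span_singleton_self _)
    · exact (Submodule.span_singleton_le_iff_mem _ _).mpr (hE j)
  · intro g hg
    have htop : (⨆ (h : G) (_ : h ≠ g), A h) = ⊤ := by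
      rw [eq_top_iff]
      intro u _
      rw [hsum u]
      refine Submodule.sum_mem _ ?_
      intro k _
      exact Submodule.mem_iSup_of_mem _ (Submodule.mem_iSup_of_mem (hg k).symm
        (Submodule.smul_mem _ _ (hE k)))
    have hd := hind g
    rw [htop] at hd
    exact disjoint_top.mp hd
end
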